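/- Let E be a set, N ≥ 2 an integer, λ₁ > 0, C ≥ 0 and k ≥ 0 real constants. Let V : E → ℝ with V(y) ≥ 1 for all y, let g : E → ℝ satisfy g(y) ≤ −λ₁ V(y) + C for all y ∈ E, and let κ : E → ℝ satisfy 0 ≤ κ(y) ≤ k for all y ∈ E. Then for every (x_1, …, x_N) ∈ E^N: ∑_{i=1}^N g(x_i) + ∑_{i=1}^N (κ(x_i)/(N−1)) ∑_{j≠i} ( V(x_j) − V(x_i) ) ≤ −( λ₁ − (N/(N−1)) k ) ∑_{i=1}^N V(x_i) + N C. -/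

import Mathlib

/-- Foster–Lyapunov inequality for the generator of the Fleming–Viot particle system:
if `g ≤ -λ₁ V + C` (with `g` playing the role of `LV`), `V ≥ 1` and `0 ≤ κ ≤ k`, then
for any `N`-tuple of particle positions,
`∑ᵢ g(xᵢ) + ∑ᵢ (κ(xᵢ)/(N-1)) ∑_{j≠i} (V(xⱼ) - V(xᵢ))
  ≤ -(λ₁ - (N/(N-1)) k) ∑ᵢ V(xᵢ) + N C`. -/
theorem fleming_viot_lyapunov
    (E : Type*) (N : ℕ) (hN : 2 ≤ N)
    (lam C k : ℝ) (hlam : 0 < lam) (hC : 0 ≤ C) (hk : 0 ≤ k)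
    (V g κ : E → ℝ) (hV : ∀ y, 1 ≤ V y)
    (hg : ∀ y, g y ≤ -lam * V y + C)
    (hκ : ∀ y, 0 ≤ κ y ∧ κ y ≤ k)
    (x : Fin N → E) :
    ∑ i, g (x i)
      + ∑ i, (κ (x i) / ((N : ℝ) - 1)) *
          ∑ j ∈ Finset.univ.filter (fun j => j ≠ i), (V (x j) - V (x i))
      ≤ -(lam - ((N : ℝ) / ((N : ℝ) - 1)) * k) * ∑ i, V (x i) + (N : ℝ) * C := by
  have hN1 : (1:ℝ) < (N:ℝ) := by exact_mod_cast lt_of_lt_of_le one_lt_two hN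
  have hN1' : (0:ℝ) < (N:ℝ) - 1 := by linarith
  set S := ∑ i, V (x i) with hS
  have hSnn : 0 ≤ S :=
    Finset.sum_nonneg fun i _ => le_trans zero_le_one (hV _)
  have h1 : ∑ i, g (x i) ≤ -lam * S + (N : ℝ) * C := by
    calc ∑ i, g (x i) ≤ ∑ i, (-lam * V (x i) + C) :=
          Finset.sum_le_sum fun i _ => hg (x i)
      _ = -lam * S + (N : ℝ) * C := by
          rw [Finset.sum_add_distrib, ← Finset.mul_sum, Finset.sum_const]
          simp [mul_comm, hS]
  have hsub : ∀ i : Fin N,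
      ∑ j ∈ Finset.univ.filter (fun j => j ≠ i), (V (x j) - V (x i)) ≤ S := by
    intro i
    have step1 : ∑ j ∈ Finset.univ.filter (fun j => j ≠ i), (V (x j) - V (x i))
        ≤ ∑ j ∈ Finset.univ.filter (fun j => j ≠ i), V (x j) := by
      apply Finset.sum_le_sum
      intro j _
      have := hV (x i); linarith
    refine step1.trans ?_
    apply Finset.sum_le_sum_of_subset_of_nonneg (Finset.filter_subset _ _)
    intro j _ _
    exact le_trans zero_le_one (hV (x j))
  have h2 : ∑ i, (κ (x i) / ((N : ℝ) - 1)) *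
        ∑ j ∈ Finset.univ.filter (fun j => j ≠ i), (V (x j) - V (x i))
      ≤ ∑ _i : Fin N, (k / ((N : ℝ) - 1)) * S := by
    apply Finset.sum_le_sum
    intro i _
    set T := ∑ j ∈ Finset.univ.filter (fun j => j ≠ i), (V (x j) - V (x i)) with hT
    obtain ⟨hκ0, hκk⟩ := hκ (x i)
    have hTS : T ≤ S := hsub i
    have key : κ (x i) * T ≤ k * S := by
      rcases le_or_gt 0 T with hT0 | hT0
      · calc κ (x i) * T ≤ k * T := mul_le_mul_of_nonneg_right hκk hT0
          _ ≤ k * S := mul_le_mul_of_nonneg_left hTS hk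
      · have : κ (x i) * T ≤ 0 := mul_nonpos_of_nonneg_of_nonpos hκ0 hT0.le
        exact this.trans (mul_nonneg hk hSnn)
    calc κ (x i) / ((N : ℝ) - 1) * T = (κ (x i) * T) / ((N : ℝ) - 1) := by ring
      _ ≤ (k * S) / ((N : ℝ) - 1) := by
          gcongr
      _ = k / ((N : ℝ) - 1) * S := by ring
  have h3 : ∑ _i : Fin N, (k / ((N : ℝ) - 1)) * S
      = ((N : ℝ) / ((N : ℝ) - 1)) * k * S := by
    rw [Finset.sum_const]
    simp only [Finset.card_univ, Fintype.card_fin, nsmul_eq_mul]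
    field_simp
  have h4 : -(lam - ((N : ℝ) / ((N : ℝ) - 1)) * k) * S + (N : ℝ) * C
      = (-lam * S + (N : ℝ) * C) + ((N : ℝ) / ((N : ℝ) - 1)) * k * S := by ring
  rw [h4]
  linarith [h2.trans_eq h3]
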